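/- Let G ∈ F_q^{k×n} generate an [n,k] MDS code, let X be uniformly distributed over F_q^{αm×k}, and Y = X·G. Let q ∈ F_q^{αm×βn} satisfy: for every T ⊆ [n] with |T| = t and every nonempty F ⊆ [m], the rank of the submatrix q[ψ_α(F), ψ_β(T)] equals the number of its nonzero columns. Then for every N ⊆ [n] with |N| = k+t−1 ≤ n and every nonempty F ⊆ [m], the entropy (in q-ary units) of the random row vector Σ_{l ∈ ψ_α(F)} (Y[l, N] ⊗ 1_β) ⋆ q[l, ψ_β(N)] equals |colsupp(q[ψ_α(F), ψ_β(N)])|. -/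

import Mathlib

/-- Entropy in `b`-ary units of a probability mass function on a finite type. -/
noncomputable def pmfQEntropy {Ω : Type*} [Fintype Ω] (b : ℕ) (p : PMF Ω) : ℝ :=
  -∑ z, ((p z).toReal * Real.logb b (p z).toReal)

set_option maxHeartbeats 1000000

open Module Matrix
open scoped ENNReal

lemma aux_entropy_map_uniform {F V W : Type*} [Field F] [Fintype F]
    [AddCommGroup V] [Module F V] [Fintype V] [DecidableEq V]
    [AddCommGroup W] [Module F W] [Fintype W] [DecidableEq W]
    (L : V →ₗ[F] W) :
    pmfQEntropy (Fintype.card F) (PMF.map ⇑L (PMF.uniformOfFintype V)) =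
      Module.finrank F (LinearMap.range L) := by
  classical
  have hne : Nonempty V := ⟨0⟩
  set Nk : ℕ := (Finset.univ.filter (fun a : V => L a = 0)).card with hNk
  set Nr : ℕ := (Finset.univ.filter (fun z : W => z ∈ Set.range ⇑L)).card with hNr
  have hfib : ∀ z : W, z ∈ Set.range ⇑L →
      (Finset.univ.filter (fun a : V => z = L a)).card = Nk := by
    rintro z ⟨x0, rfl⟩
    rw [hNk]
    apply Finset.card_bij' (fun a _ => a - x0) (fun a _ => a + x0)
    · intro a ha
      simp only [Finset.mem_filter, Finset.mem_univ, true_and] at ha ⊢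
      rw [map_sub, ← ha, sub_self]
    · intro a ha
      simp only [Finset.mem_filter, Finset.mem_univ, true_and] at ha ⊢
      rw [map_add, ha, zero_add]
    · intro a _; simp
    · intro a _; simp
  have hfib0 : ∀ z : W, z ∉ Set.range ⇑L →
      (Finset.univ.filter (fun a : V => z = L a)).card = 0 := by
    intro z hz
    rw [Finset.card_eq_zero, Finset.filter_eq_empty_iff]
    intro a _
    exact fun h => hz ⟨a, h.symm⟩
  have hcard : Fintype.card V = Nr * Nk := by
    have h0 := Finset.card_eq_sum_card_fiberwise
      (f := fun a : V => L a) (s := Finset.univ) (t := Finset.univ) (fun a _ => Finset.mem_univ _)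
    rw [Finset.card_univ] at h0
    rw [h0, ← Finset.sum_filter_add_sum_filter_not Finset.univ (fun z : W => z ∈ Set.range ⇑L)]
    have h2 : ∀ z ∈ Finset.univ.filter (fun z : W => z ∉ Set.range ⇑L),
        (Finset.univ.filter (fun a : V => L a = z)).card = 0 := by
      intro z hz
      simp only [Finset.mem_filter] at hz
      simpa [eq_comm] using hfib0 z hz.2
    have h1 : ∀ z ∈ Finset.univ.filter (fun z : W => z ∈ Set.range ⇑L),
        (Finset.univ.filter (fun a : V => L a = z)).card = Nk := by
      intro z hz
      simp only [Finset.mem_filter] at hz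
      simpa [eq_comm] using hfib z hz.2
    rw [Finset.sum_congr rfl h2, Finset.sum_congr rfl h1, Finset.sum_const, Finset.sum_const,
      smul_eq_mul, smul_eq_mul, mul_zero, add_zero]
  have hNkpos : 0 < Nk := by
    rw [hNk, Finset.card_pos]
    exact ⟨0, by simp [Finset.mem_filter]⟩
  have hNrpos : 0 < Nr := by
    rw [hNr, Finset.card_pos]
    refine ⟨L 0, ?_⟩
    simp only [Finset.mem_filter, Finset.mem_univ, true_and]
    exact ⟨0, rfl⟩
  have hval : ∀ z : W, (PMF.map ⇑L (PMF.uniformOfFintype V)) z =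
      ((Finset.univ.filter (fun a : V => z = L a)).card : ℝ≥0∞) / Fintype.card V := by
    intro z
    rw [PMF.map_apply, tsum_fintype]
    simp only [PMF.uniformOfFintype_apply]
    rw [← Finset.sum_filter, Finset.sum_const, nsmul_eq_mul, div_eq_mul_inv]
  -- real value on the range
  have hvalr : ∀ z : W, z ∈ Set.range ⇑L →
      ((PMF.map ⇑L (PMF.uniformOfFintype V)) z).toReal = (Nr : ℝ)⁻¹ := by
    intro z hz
    rw [hval, hfib z hz, ENNReal.toReal_div, ENNReal.toReal_natCast, ENNReal.toReal_natCast,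
      hcard]
    push_cast
    have hk : (Nk:ℝ) ≠ 0 := by positivity
    have hr : (Nr:ℝ) ≠ 0 := by positivity
    field_simp
  have hval0 : ∀ z : W, z ∉ Set.range ⇑L →
      ((PMF.map ⇑L (PMF.uniformOfFintype V)) z).toReal = 0 := by
    intro z hz
    rw [hval, hfib0 z hz]
    simp
  -- entropy is logb of Nr
  have hent : pmfQEntropy (Fintype.card F) (PMF.map ⇑L (PMF.uniformOfFintype V)) =
      Real.logb (Fintype.card F) Nr := by
    rw [pmfQEntropy]
    rw [← Finset.sum_filter_add_sum_filter_not Finset.univ (fun z : W => z ∈ Set.range ⇑L)]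
    have h2 : ∀ z ∈ Finset.univ.filter (fun z : W => z ∉ Set.range ⇑L),
        ((PMF.map ⇑L (PMF.uniformOfFintype V)) z).toReal *
          Real.logb (Fintype.card F) ((PMF.map ⇑L (PMF.uniformOfFintype V)) z).toReal = 0 := by
      intro z hz
      simp only [Finset.mem_filter] at hz
      rw [hval0 z hz.2, zero_mul]
    have h1 : ∀ z ∈ Finset.univ.filter (fun z : W => z ∈ Set.range ⇑L),
        ((PMF.map ⇑L (PMF.uniformOfFintype V)) z).toReal *
          Real.logb (Fintype.card F) ((PMF.map ⇑L (PMF.uniformOfFintype V)) z).toReal =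
          (Nr : ℝ)⁻¹ * Real.logb (Fintype.card F) (Nr : ℝ)⁻¹ := by
      intro z hz
      simp only [Finset.mem_filter] at hz
      rw [hvalr z hz.2]
    rw [Finset.sum_congr rfl h1, Finset.sum_congr rfl h2, Finset.sum_const, Finset.sum_const,
      smul_zero, add_zero, nsmul_eq_mul, ← hNr, Real.logb_inv]
    have hNrne : (Nr : ℝ) ≠ 0 := by positivity
    field_simp
  rw [hent]
  -- Nr = (card F) ^ finrank
  have hNreq : Nr = Fintype.card F ^ finrank F (LinearMap.range L) := by
    calc Nr = Nat.card {z : W // z ∈ Set.range ⇑L} := by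
          rw [Nat.card_eq_fintype_card]
          have h := Fintype.card_subtype (p := fun z : W => z ∈ Set.range ⇑L)
          convert h.symm
      _ = Nat.card (LinearMap.range L) := Nat.card_congr
          (Equiv.subtypeEquivRight (fun z => by simp [LinearMap.mem_range, Set.mem_range]))
      _ = Fintype.card F ^ finrank F (LinearMap.range L) := by
          letI : Fintype (LinearMap.range L) := Fintype.ofFinite _
          rw [Nat.card_eq_fintype_card]
          exact card_eq_pow_finrank (K := F)
  rw [hNreq]
  have hb : (1:ℝ) < (Fintype.card F : ℝ) := by exact_mod_cast Fintype.one_lt_card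
  push_cast
  rw [Real.logb_pow, Real.logb_self_eq_one hb, mul_one]

lemma aux_lam_zero {F : Type*} [Field F] [Fintype F] [DecidableEq F]
    {n k t m α β : ℕ} (hk : 1 ≤ k) (ht : 1 ≤ t)
    (G : Matrix (Fin k) (Fin n) F)
    (hMDS : ∀ s : Fin k ↪ Fin n, IsUnit (G.submatrix id s).det)
    (q : Matrix (Fin m × Fin α) (Fin n × Fin β) F)
    (hq : ∀ T : Finset (Fin n), T.card = t → ∀ Fs : Finset (Fin m), Fs.Nonempty →
      Matrix.rank (fun (r : {r : Fin m × Fin α // r.1 ∈ Fs})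
          (p : {p : Fin n × Fin β // p.1 ∈ T}) => q r.1 p.1)
        = (Finset.univ.filter (fun p : {p : Fin n × Fin β // p.1 ∈ T} =>
            ∃ r : {r : Fin m × Fin α // r.1 ∈ Fs}, q r.1 p.1 ≠ 0)).card)
    (N : Finset (Fin n)) (hN : N.card = k + t - 1)
    (Fs : Finset (Fin m)) (hFs : Fs.Nonempty)
    (lam : {c : {p : Fin n × Fin β // p.1 ∈ N} //
        ∃ r : {r : Fin m × Fin α // r.1 ∈ Fs}, q r.1 c.1 ≠ 0} → F)
    (H : ∀ X : Matrix (Fin m × Fin α) (Fin k) F,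
      ∑ c, lam c * ∑ r ∈ Finset.univ.filter (fun r : Fin m × Fin α => r.1 ∈ Fs),
        (X * G) r c.1.1.1 * q r c.1.1 = 0) :
    lam = 0 := by
  classical
  -- step A : plug in standard basis matrices
  have hmul : ∀ (r0 : Fin m × Fin α) (i : Fin k) (r : Fin m × Fin α) (j : Fin n),
      (Matrix.single r0 i (1:F) * G) r j = if r = r0 then G i j else 0 := by
    intro r0 i r j
    rw [Matrix.mul_apply]
    by_cases h : r = r0
    · subst h
      simp [Matrix.single, Matrix.of_apply, ite_and, eq_comm (a := i)]
    · rw [if_neg h]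
      apply Finset.sum_eq_zero
      intro i' _
      have hz : Matrix.single r0 i (1:F) r i' = 0 := by
        rw [Matrix.single, Matrix.of_apply, if_neg (fun hc => h hc.1.symm)]
      rw [hz, zero_mul]
  have hA : ∀ (r0 : Fin m × Fin α), r0.1 ∈ Fs → ∀ i : Fin k,
      ∑ c, lam c * (G i c.1.1.1 * q r0 c.1.1) = 0 := by
    intro r0 hr0 i
    have h := H (Matrix.single r0 i 1)
    have hinner : ∀ c : {c : {p : Fin n × Fin β // p.1 ∈ N} //
        ∃ r : {r : Fin m × Fin α // r.1 ∈ Fs}, q r.1 c.1 ≠ 0},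
        ∑ r ∈ Finset.univ.filter (fun r : Fin m × Fin α => r.1 ∈ Fs),
          (Matrix.single r0 i (1:F) * G) r c.1.1.1 * q r c.1.1
          = G i c.1.1.1 * q r0 c.1.1 := by
      intro c
      have : ∀ r ∈ Finset.univ.filter (fun r : Fin m × Fin α => r.1 ∈ Fs),
          (Matrix.single r0 i (1:F) * G) r c.1.1.1 * q r c.1.1
          = if r = r0 then G i c.1.1.1 * q r c.1.1 else 0 := by
        intro r _
        rw [hmul]
        by_cases h : r = r0 <;> simp [h]
      rw [Finset.sum_congr rfl this, Finset.sum_ite_eq' _ r0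
        (fun r => G i c.1.1.1 * q r c.1.1), if_pos (by simp [hr0])]
    simp only [hinner] at h
    exact h
  -- the grouped column sums
  set z : (Fin m × Fin α) → Fin n → F := fun r0 j =>
    ∑ c : {c : {p : Fin n × Fin β // p.1 ∈ N} //
        ∃ r : {r : Fin m × Fin α // r.1 ∈ Fs}, q r.1 c.1 ≠ 0},
      if c.1.1.1 = j then lam c * q r0 c.1.1 else 0 with hzdef
  -- step B : MDS relations for the z's
  have hB : ∀ (r0 : Fin m × Fin α), r0.1 ∈ Fs → ∀ i : Fin k,
      ∑ j ∈ N, G i j * z r0 j = 0 := by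
    intro r0 hr0 i
    have : ∀ j ∈ N, G i j * z r0 j =
        ∑ c : {c : {p : Fin n × Fin β // p.1 ∈ N} //
            ∃ r : {r : Fin m × Fin α // r.1 ∈ Fs}, q r.1 c.1 ≠ 0},
          if c.1.1.1 = j then G i j * (lam c * q r0 c.1.1) else 0 := by
      intro j _
      rw [hzdef, Finset.mul_sum]
      exact Finset.sum_congr rfl fun c _ => by rw [mul_ite, mul_zero]
    rw [Finset.sum_congr rfl this, Finset.sum_comm]
    have h2 : ∀ c : {c : {p : Fin n × Fin β // p.1 ∈ N} //
        ∃ r : {r : Fin m × Fin α // r.1 ∈ Fs}, q r.1 c.1 ≠ 0},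
        ∑ j ∈ N, (if c.1.1.1 = j then G i j * (lam c * q r0 c.1.1) else 0)
        = lam c * (G i c.1.1.1 * q r0 c.1.1) := by
      intro c
      rw [Finset.sum_ite_eq N c.1.1.1 (fun j => G i j * (lam c * q r0 c.1.1)),
        if_pos c.1.2]
      ring
    rw [Finset.sum_congr rfl fun c _ => h2 c]
    exact hA r0 hr0 i
  -- step C : each lam c0 vanishes
  have hC : ∀ c0, lam c0 = 0 := by
    intro c0
    set j0 : Fin n := c0.1.1.1 with hj0def
    have hj0N : j0 ∈ N := c0.1.2
    obtain ⟨S, hSsub, hScard⟩ : ∃ S ⊆ N.erase j0, S.card = t - 1 := by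
      apply Finset.exists_subset_card_eq
      rw [Finset.card_erase_of_mem hj0N, hN]
      omega
    have hSN : S ⊆ N := hSsub.trans (Finset.erase_subset _ _)
    have hj0S : j0 ∉ S := fun h => (Finset.notMem_erase j0 N) (hSsub h)
    -- Claim 1 : z · j0 lies in the span of the z · j , j ∈ S
    have claim1 : (fun r : {r : Fin m × Fin α // r.1 ∈ Fs} => z r.1 j0) ∈
        Submodule.span F (Set.range
          (fun j : ↥S => fun r : {r : Fin m × Fin α // r.1 ∈ Fs} => z r.1 ↑j)) := by
      by_contra hmem
      obtain ⟨φ, hφ0, hφbot⟩ :=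
        Submodule.exists_dual_map_eq_bot_of_notMem hmem inferInstance
      have hker : ∀ x ∈ Submodule.span F (Set.range
          (fun j : ↥S => fun r : {r : Fin m × Fin α // r.1 ∈ Fs} => z r.1 ↑j)),
          φ x = 0 := by
        intro x hx
        have hmem2 : φ x ∈ Submodule.map φ (Submodule.span F (Set.range
            (fun j : ↥S => fun r : {r : Fin m × Fin α // r.1 ∈ Fs} => z r.1 ↑j))) :=
          Submodule.mem_map_of_mem hx
        rw [hφbot] at hmem2
        exact (Submodule.mem_bot F).mp hmem2
      set y : Fin n → F := fun j =>
        if j ∈ N then φ (fun r : {r : Fin m × Fin α // r.1 ∈ Fs} => z r.1 j) else 0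
        with hydef
      have hyS : ∀ j ∈ S, y j = 0 := by
        intro j hj
        have : (fun r : {r : Fin m × Fin α // r.1 ∈ Fs} => z r.1 j) ∈
            Submodule.span F (Set.range
              (fun j : ↥S => fun r : {r : Fin m × Fin α // r.1 ∈ Fs} => z r.1 ↑j)) :=
          Submodule.subset_span ⟨⟨j, hj⟩, rfl⟩
        have := hker _ this
        rw [hydef]
        simp only [if_pos (hSN hj)]
        exact this
      have hrel : ∀ i : Fin k, ∑ j ∈ N, G i j * y j = 0 := by
        intro i
        have hz0 : (∑ j ∈ N, G i j •
            (fun r : {r : Fin m × Fin α // r.1 ∈ Fs} => z r.1 j)) =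
            (0 : {r : Fin m × Fin α // r.1 ∈ Fs} → F) := by
          funext r
          rw [Finset.sum_apply]
          simp only [Pi.smul_apply, smul_eq_mul, Pi.zero_apply]
          exact hB r.1 r.2 i
        have := congrArg φ hz0
        rw [map_sum, map_zero] at this
        rw [← this]
        apply Finset.sum_congr rfl
        intro j hj
        rw [_root_.map_smul, smul_eq_mul, hydef]
        simp only [if_pos hj]
      set D : Finset (Fin n) := N \ S with hDdef
      have hDcard : D.card = k := by
        rw [hDdef, Finset.card_sdiff_of_subset hSN, hN, hScard]
        omega
      have hrelD : ∀ i : Fin k, ∑ j ∈ D, G i j * y j = 0 := by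
        intro i
        rw [Finset.sum_subset (Finset.sdiff_subset (s := N) (t := S))]
        · exact hrel i
        · intro j hjN hjD
          have hjS : j ∈ S := by
            by_contra h
            exact hjD (Finset.mem_sdiff.mpr ⟨hjN, h⟩)
          rw [hyS j hjS, mul_zero]
      set e := D.orderIsoOfFin hDcard with hedef
      set emb : Fin k ↪ Fin n :=
        ⟨fun l => (e l : Fin n), fun a b hab => e.injective (Subtype.ext hab)⟩ with hembdef
      have hAv : (G.submatrix id emb) *ᵥ (fun l => y (emb l)) = 0 := by
        funext i
        rw [Matrix.mulVec, dotProduct]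
        simp only [Matrix.submatrix_apply, id_eq, Pi.zero_apply]
        have : ∑ l : Fin k, G i (emb l) * y (emb l) = ∑ j ∈ D, G i j * y j := by
          rw [← Finset.sum_coe_sort D (fun j => G i j * y j)]
          exact Fintype.sum_equiv e.toEquiv _ _ (fun l => rfl)
        rw [this]
        exact hrelD i
      have hv0 : (fun l => y (emb l)) = 0 := by
        have hinj := (Matrix.mulVec_injective_iff_isUnit (A := G.submatrix id emb)).mpr ((Matrix.isUnit_iff_isUnit_det _).mpr (hMDS emb))
        apply hinj
        rw [hAv, Matrix.mulVec_zero]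
      have hj0D : j0 ∈ D := Finset.mem_sdiff.mpr ⟨hj0N, hj0S⟩
      have : y j0 = 0 := by
        have := congrFun hv0 (e.symm ⟨j0, hj0D⟩)
        have h2 : emb (e.symm ⟨j0, hj0D⟩) = j0 :=
          congrArg Subtype.val (e.apply_symm_apply ⟨j0, hj0D⟩)
        calc y j0 = y (emb (e.symm ⟨j0, hj0D⟩)) := by rw [h2]
          _ = 0 := this
      rw [hydef] at this
      simp only [if_pos hj0N] at this
      exact hφ0 this
    -- Claim 2 : extract coefficients
    obtain ⟨μ, hμ⟩ := (Submodule.mem_span_range_iff_exists_fun F).mp claim1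
    set T : Finset (Fin n) := insert j0 S with hTdef
    have hTcard : T.card = t := by
      rw [hTdef, Finset.card_insert_of_notMem hj0S, hScard]; omega
    have hqT := hq T hTcard Fs hFs
    have hspan : Submodule.span F (Set.range (fun c : {p : {p : Fin n × Fin β // p.1 ∈ T} //
          ∃ r : {r : Fin m × Fin α // r.1 ∈ Fs}, q r.1 p.1 ≠ 0} =>
          (fun r : {r : Fin m × Fin α // r.1 ∈ Fs} => q r.1 c.1.1)))
        = Submodule.span F (Set.range (fun p : {p : Fin n × Fin β // p.1 ∈ T} =>
          (fun r : {r : Fin m × Fin α // r.1 ∈ Fs} => q r.1 p.1))) := by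
      apply le_antisymm
      · apply Submodule.span_mono
        rintro _ ⟨c, rfl⟩
        exact ⟨c.1, rfl⟩
      · rw [Submodule.span_le]
        rintro _ ⟨p, rfl⟩
        by_cases h : ∃ r : {r : Fin m × Fin α // r.1 ∈ Fs}, q r.1 p.1 ≠ 0
        · exact Submodule.subset_span ⟨⟨p, h⟩, rfl⟩
        · push_neg at h
          have hzero : (fun r : {r : Fin m × Fin α // r.1 ∈ Fs} => q r.1 p.1) = 0 := by
            funext r; exact h r
          show (fun r : {r : Fin m × Fin α // r.1 ∈ Fs} => q r.1 p.1) ∈ _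
          rw [hzero]
          exact SetLike.mem_coe.mpr (Submodule.zero_mem _)
    have hind : LinearIndependent F (fun c : {p : {p : Fin n × Fin β // p.1 ∈ T} //
        ∃ r : {r : Fin m × Fin α // r.1 ∈ Fs}, q r.1 p.1 ≠ 0} =>
        (fun r : {r : Fin m × Fin α // r.1 ∈ Fs} => q r.1 c.1.1)) := by
      rw [linearIndependent_iff_card_eq_finrank_span, Set.finrank, hspan, Fintype.card_subtype,
        ← hqT]
      exact Matrix.rank_eq_finrank_span_cols _
    have hinj' : Function.Injective (fun c : {c : {c : {p : Fin n × Fin β // p.1 ∈ N} //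
        ∃ r : {r : Fin m × Fin α // r.1 ∈ Fs}, q r.1 c.1 ≠ 0} // c.1.1.1 ∈ T} =>
        (⟨⟨c.1.1.1, c.2⟩, c.1.2⟩ : {p : {p : Fin n × Fin β // p.1 ∈ T} //
          ∃ r : {r : Fin m × Fin α // r.1 ∈ Fs}, q r.1 p.1 ≠ 0})) := by
      intro a b hab
      have h1 : a.1.1.1 = b.1.1.1 := congrArg (fun x => x.1.1) hab
      exact Subtype.ext (Subtype.ext (Subtype.ext h1))
    have hindC : LinearIndependent F (fun c : {c : {c : {p : Fin n × Fin β // p.1 ∈ N} //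
        ∃ r : {r : Fin m × Fin α // r.1 ∈ Fs}, q r.1 c.1 ≠ 0} // c.1.1.1 ∈ T} =>
        (fun r : {r : Fin m × Fin α // r.1 ∈ Fs} => q r.1 c.1.1.1)) :=
      hind.comp _ hinj'
    set μ' : Fin n → F := fun j => if h : j ∈ S then μ ⟨j, h⟩ else 0 with hμ'def
    set w : Fin n → F := fun j => if j = j0 then 1 else -μ' j with hwdef
    have hμμ' : ∀ j : ↥S, μ j = μ' ↑j := by
      intro j
      rw [hμ'def]
      simp only [j.2, dif_pos]
    have hrel0 : ∑ c : {c : {c : {p : Fin n × Fin β // p.1 ∈ N} //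
        ∃ r : {r : Fin m × Fin α // r.1 ∈ Fs}, q r.1 c.1 ≠ 0} // c.1.1.1 ∈ T},
        (lam c.1 * w c.1.1.1.1) •
          (fun r : {r : Fin m × Fin α // r.1 ∈ Fs} => q r.1 c.1.1.1) = 0 := by
      funext r
      rw [Finset.sum_apply]
      simp only [Pi.smul_apply, smul_eq_mul, Pi.zero_apply]
      have hμr := congrFun hμ r
      rw [Finset.sum_apply] at hμr
      simp only [Pi.smul_apply, smul_eq_mul] at hμr
      have hdiff : z r.1 j0 - ∑ j : ↥S, μ j * z r.1 ↑j = 0 := by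
        rw [hμr, sub_self]
      have hright : ∑ j : ↥S, μ j * z r.1 ↑j =
          ∑ c : {c : {p : Fin n × Fin β // p.1 ∈ N} //
              ∃ r : {r : Fin m × Fin α // r.1 ∈ Fs}, q r.1 c.1 ≠ 0},
            (if c.1.1.1 ∈ S then μ' c.1.1.1 * (lam c * q r.1 c.1.1) else 0) := by
        have h1 : ∀ j : ↥S, μ j * z r.1 ↑j = μ' ↑j * z r.1 ↑j := by
          intro j; rw [hμμ' j]
        rw [Finset.sum_congr rfl (fun j _ => h1 j),
          Finset.sum_coe_sort S (fun j => μ' j * z r.1 j)]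
        have h2 : ∀ j ∈ S, μ' j * z r.1 j =
            ∑ c : {c : {p : Fin n × Fin β // p.1 ∈ N} //
                ∃ r : {r : Fin m × Fin α // r.1 ∈ Fs}, q r.1 c.1 ≠ 0},
              (if c.1.1.1 = j then μ' j * (lam c * q r.1 c.1.1) else 0) := by
          intro j _
          rw [hzdef, Finset.mul_sum]
          exact Finset.sum_congr rfl fun c _ => by rw [mul_ite, mul_zero]
        rw [Finset.sum_congr rfl h2, Finset.sum_comm]
        apply Finset.sum_congr rfl
        intro c _
        have h3 : ∀ j ∈ S, (if c.1.1.1 = j then μ' j * (lam c * q r.1 c.1.1) else 0)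
            = (if c.1.1.1 = j then μ' c.1.1.1 * (lam c * q r.1 c.1.1) else 0) := by
          intro j _
          by_cases h : c.1.1.1 = j
          · subst h; rfl
          · rw [if_neg h, if_neg h]
        rw [Finset.sum_congr rfl h3,
          Finset.sum_ite_eq S c.1.1.1 (fun _ => μ' c.1.1.1 * (lam c * q r.1 c.1.1))]
      have hleft : z r.1 j0 =
          ∑ c : {c : {p : Fin n × Fin β // p.1 ∈ N} //
              ∃ r : {r : Fin m × Fin α // r.1 ∈ Fs}, q r.1 c.1 ≠ 0},
            (if c.1.1.1 = j0 then lam c * q r.1 c.1.1 else 0) := by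
        rw [hzdef]
      rw [hleft, hright, ← Finset.sum_sub_distrib] at hdiff
      -- rewrite each bracket as an indicator over T
      have hbr : ∀ c : {c : {p : Fin n × Fin β // p.1 ∈ N} //
          ∃ r : {r : Fin m × Fin α // r.1 ∈ Fs}, q r.1 c.1 ≠ 0},
          ((if c.1.1.1 = j0 then lam c * q r.1 c.1.1 else 0)
            - (if c.1.1.1 ∈ S then μ' c.1.1.1 * (lam c * q r.1 c.1.1) else 0))
          = (if c.1.1.1 ∈ T then (lam c * w c.1.1.1) * q r.1 c.1.1 else 0) := by
        intro c
        by_cases h1 : c.1.1.1 = j0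
        · rw [if_pos h1, if_neg (h1 ▸ hj0S), if_pos (by rw [hTdef, h1]; exact Finset.mem_insert_self _ _)]
          rw [hwdef]
          simp only [if_pos h1]
          ring
        · by_cases h2 : c.1.1.1 ∈ S
          · rw [if_neg h1, if_pos h2, if_pos (by rw [hTdef]; exact Finset.mem_insert_of_mem h2)]
            rw [hwdef]
            simp only [if_neg h1]
            ring
          · rw [if_neg h1, if_neg h2, if_neg (by rw [hTdef]; simp [h1, h2])]
            ring
      rw [Finset.sum_congr rfl (fun c _ => hbr c)] at hdiff
      rw [← Finset.sum_filter] at hdiff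
      rw [Finset.sum_subtype (p := fun c : {c : {p : Fin n × Fin β // p.1 ∈ N} //
          ∃ r : {r : Fin m × Fin α // r.1 ∈ Fs}, q r.1 c.1 ≠ 0} => c.1.1.1 ∈ T)
        (Finset.univ.filter (fun c : {c : {p : Fin n × Fin β // p.1 ∈ N} //
          ∃ r : {r : Fin m × Fin α // r.1 ∈ Fs}, q r.1 c.1 ≠ 0} => c.1.1.1 ∈ T))
        (by intro x; simp) (fun c => (lam c * w c.1.1.1) * q r.1 c.1.1)] at hdiff
      exact hdiff
    have hν0 := Fintype.linearIndependent_iff.mp hindC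
      (fun c => lam c.1 * w c.1.1.1.1) hrel0
    have hc0T : c0.1.1.1 ∈ T := by
      rw [hTdef, hj0def]
      exact Finset.mem_insert_self _ _
    have := hν0 ⟨c0, hc0T⟩
    rw [hwdef] at this
    simpa [hj0def] using this
  funext c0
  exact hC c0

/-- For a uniformly distributed MDS-coded storage `Y = X·G` and a query matrix `q` of
full support-rank, the entropy (in `q`-ary units, `q = |F|`) of the responses
`Σ_{l ∈ ψ_α(F)} (Y[l,N] ⊗ 1_β) ⋆ q[l, ψ_β(N)]` of any `k+t-1` servers `N` equals the
number of nonzero columns of `q[ψ_α(F), ψ_β(N)]`. Rows of `q` are indexed by pairs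
(file, stripe) and columns by pairs (server, iteration). -/
theorem entropy_responses_eq_colsupp {F : Type*} [Field F] [Fintype F] [DecidableEq F]
    {n k t m α β : ℕ} (hk : 1 ≤ k) (ht : 1 ≤ t) (hβ : 1 ≤ β) (hktn : k + t - 1 ≤ n)
    (G : Matrix (Fin k) (Fin n) F)
    -- MDS: every `k` columns of `G` are linearly independent
    (hMDS : ∀ s : Fin k ↪ Fin n, IsUnit (G.submatrix id s).det)
    (q : Matrix (Fin m × Fin α) (Fin n × Fin β) F)
    -- full support-rank: for every `T` of `t` servers and nonempty file set `Fs`,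
    -- the rank of `q[ψ_α(Fs), ψ_β(T)]` equals its number of nonzero columns
    (hq : ∀ T : Finset (Fin n), T.card = t → ∀ Fs : Finset (Fin m), Fs.Nonempty →
      Matrix.rank (fun (r : {r : Fin m × Fin α // r.1 ∈ Fs})
          (p : {p : Fin n × Fin β // p.1 ∈ T}) => q r.1 p.1)
        = (Finset.univ.filter (fun p : {p : Fin n × Fin β // p.1 ∈ T} =>
            ∃ r : {r : Fin m × Fin α // r.1 ∈ Fs}, q r.1 p.1 ≠ 0)).card)
    (N : Finset (Fin n)) (hN : N.card = k + t - 1)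
    (Fs : Finset (Fin m)) (hFs : Fs.Nonempty) :
    pmfQEntropy (Fintype.card F)
        (PMF.map
          (fun X : Matrix (Fin m × Fin α) (Fin k) F =>
            fun p : {p : Fin n × Fin β // p.1 ∈ N} =>
              ∑ r ∈ Finset.univ.filter (fun r : Fin m × Fin α => r.1 ∈ Fs),
                (X * G) r p.1.1 * q r p.1)
          (PMF.uniformOfFintype (Matrix (Fin m × Fin α) (Fin k) F)))
      = (Finset.univ.filter (fun p : {p : Fin n × Fin β // p.1 ∈ N} =>
          ∃ r : {r : Fin m × Fin α // r.1 ∈ Fs}, q r.1 p.1 ≠ 0)).card := by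
  classical
  let L : Matrix (Fin m × Fin α) (Fin k) F →ₗ[F] ({p : Fin n × Fin β // p.1 ∈ N} → F) :=
    { toFun := fun X => fun p => ∑ r ∈ Finset.univ.filter (fun r : Fin m × Fin α => r.1 ∈ Fs),
        (X * G) r p.1.1 * q r p.1
      map_add' := by
        intro X Y
        funext p
        simp only [Pi.add_apply, Matrix.add_mul]
        rw [← Finset.sum_add_distrib]
        exact Finset.sum_congr rfl fun r _ => by rw [Matrix.add_apply, add_mul]
      map_smul' := by
        intro c X
        funext p
        simp only [RingHom.id_apply, Pi.smul_apply, smul_eq_mul, Matrix.smul_mul,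
          Matrix.smul_apply, Finset.mul_sum]
        exact Finset.sum_congr rfl fun r _ => by ring }
  have hLfun : (fun X : Matrix (Fin m × Fin α) (Fin k) F =>
      fun p : {p : Fin n × Fin β // p.1 ∈ N} =>
        ∑ r ∈ Finset.univ.filter (fun r : Fin m × Fin α => r.1 ∈ Fs),
          (X * G) r p.1.1 * q r p.1) = ⇑L := rfl
  let Φ : Matrix (Fin m × Fin α) (Fin k) F →ₗ[F]
      ({c : {p : Fin n × Fin β // p.1 ∈ N} //
        ∃ r : {r : Fin m × Fin α // r.1 ∈ Fs}, q r.1 c.1 ≠ 0} → F) :=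
    (LinearMap.funLeft F F (fun c => c.1)).comp L
  have hker : LinearMap.ker L = LinearMap.ker Φ := by
    apply le_antisymm
    · intro X hX
      rw [LinearMap.mem_ker] at *
      rw [LinearMap.comp_apply, hX]
      simp
    · intro X hX
      rw [LinearMap.mem_ker] at *
      funext p
      by_cases h : ∃ r : {r : Fin m × Fin α // r.1 ∈ Fs}, q r.1 p.1 ≠ 0
      · have := congrFun hX ⟨p, h⟩
        exact this
      · push_neg at h
        show (∑ r ∈ Finset.univ.filter (fun r : Fin m × Fin α => r.1 ∈ Fs),
          (X * G) r p.1.1 * q r p.1) = 0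
        apply Finset.sum_eq_zero
        intro r hr
        rw [Finset.mem_filter] at hr
        rw [h ⟨r, hr.2⟩, mul_zero]
  have hsurj : Function.Surjective Φ := by
    rw [← LinearMap.range_eq_top]
    by_contra hne
    obtain ⟨φ, hφ0, hφbot⟩ := Submodule.exists_dual_map_eq_bot_of_lt_top
      (lt_top_iff_ne_top.mpr hne) inferInstance
    set lam : {c : {p : Fin n × Fin β // p.1 ∈ N} //
        ∃ r : {r : Fin m × Fin α // r.1 ∈ Fs}, q r.1 c.1 ≠ 0} → F :=
      fun c => φ (fun c' => if c = c' then 1 else 0) with hlamdef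
    have hrep : ∀ v, φ v = ∑ c, v c * lam c := by
      intro v
      conv_lhs => rw [pi_eq_sum_univ v]
      rw [map_sum]
      apply Finset.sum_congr rfl
      intro c _
      rw [_root_.map_smul, smul_eq_mul]
    have hzero : ∀ X : Matrix (Fin m × Fin α) (Fin k) F,
        ∑ c, lam c * ∑ r ∈ Finset.univ.filter (fun r : Fin m × Fin α => r.1 ∈ Fs),
          (X * G) r c.1.1.1 * q r c.1.1 = 0 := by
      intro X
      have h1 : Φ X ∈ LinearMap.range Φ := ⟨X, rfl⟩
      have h2 : φ (Φ X) = 0 := by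
        have hmem : φ (Φ X) ∈ Submodule.map φ (LinearMap.range Φ) :=
          Submodule.mem_map_of_mem h1
        rw [hφbot] at hmem
        exact (Submodule.mem_bot F).mp hmem
      have h2' := (hrep (Φ X)).symm.trans h2
      refine Eq.trans ?_ h2'
      apply Finset.sum_congr rfl
      intro c _
      rw [mul_comm]
      rfl
    have hlam0 := aux_lam_zero hk ht G hMDS q hq N hN Fs hFs lam hzero
    apply hφ0
    apply LinearMap.ext
    intro v
    rw [hrep v, hlam0]
    simp
  have hsuff : finrank F (LinearMap.range L) =
      (Finset.univ.filter (fun p : {p : Fin n × Fin β // p.1 ∈ N} =>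
        ∃ r : {r : Fin m × Fin α // r.1 ∈ Fs}, q r.1 p.1 ≠ 0)).card := by
    have h1 := LinearMap.finrank_range_add_finrank_ker L
    have h2 := LinearMap.finrank_range_add_finrank_ker Φ
    rw [hker] at h1
    have h3 : finrank F (LinearMap.range L) = finrank F (LinearMap.range Φ) := by omega
    rw [h3, LinearMap.range_eq_top.mpr hsurj, finrank_top,
      Module.finrank_fintype_fun_eq_card, Fintype.card_subtype]
  rw [hLfun, aux_entropy_map_uniform L, hsuff]
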